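/- There is an absolute constant C > 0 such that for every integer λ ≥ 1 and every finite simple graph G on n vertices in which both vertices and edges are colored, G has a subgraph H with at most C·λ²·n edges such that for every set F of at most λ colors and all vertices u, v, u and v are connected in H−F if and only if they are connected in G−F. -/

import Mathlib

open SimpleGraph

section
open Finset

namespace Stmt6

variable {V 𝒞 : Type}




def kif (cE : Sym2 V → 𝒞) (cV : V → 𝒞) (F : Finset 𝒞) : Set (Sym2 V) :=
  {e | cE e ∈ F ∨ ∃ x ∈ e, cV x ∈ F}

lemma kif_mono (cE : Sym2 V → 𝒞) (cV : V → 𝒞) {F T : Finset 𝒞} (h : F ⊆ T) :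
    kif cE cV F ⊆ kif cE cV T := by
  intro e he
  rcases he with h1 | ⟨x, hx, h2⟩
  · exact Or.inl (h h1)
  · exact Or.inr ⟨x, hx, h h2⟩

lemma mem_kif {cE : Sym2 V → 𝒞} {cV : V → 𝒞} {F : Finset 𝒞} {a b : V} :
    s(a,b) ∈ kif cE cV F ↔ (cE s(a,b) ∈ F ∨ cV a ∈ F ∨ cV b ∈ F) := by
  unfold kif
  simp only [Set.mem_setOf_eq, Sym2.mem_iff]
  constructor
  · rintro (h | ⟨x, (rfl|rfl), hx⟩)
    · exact Or.inl h
    · exact Or.inr (Or.inl hx)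
    · exact Or.inr (Or.inr hx)
  · rintro (h | h | h)
    · exact Or.inl h
    · exact Or.inr ⟨a, Or.inl rfl, h⟩
    · exact Or.inr ⟨b, Or.inr rfl, h⟩

/-- Walk surgery: if the endpoints of a deleted edge remain connected, reachability
is preserved. -/
lemma reach_del (K : SimpleGraph V) (a b : V)
    (hr : (K.deleteEdges {s(a,b)}).Reachable a b) {u v : V}
    (h : K.Reachable u v) : (K.deleteEdges {s(a,b)}).Reachable u v := by
  obtain ⟨W⟩ := h
  induction W with
  | nil => exact Reachable.refl _
  | @cons x y z hadj _ ih =>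
    refine Reachable.trans ?_ ih
    by_cases he : s(x,y) = s(a,b)
    · rw [Sym2.eq_iff] at he
      rcases he with ⟨rfl, rfl⟩ | ⟨rfl, rfl⟩
      · exact hr
      · exact hr.symm
    · exact Adj.reachable (by rw [deleteEdges_adj]; exact ⟨hadj, he⟩)


lemma comp_le_card [Finite V] (K : SimpleGraph V) :
    Nat.card K.ConnectedComponent ≤ Nat.card V :=
  Nat.card_le_card_of_surjective K.connectedComponentMk
    (fun c => c.exists_rep)

/-- Removing a bridge strictly increases the number of connected components. -/
lemma comp_succ [Finite V] (K : SimpleGraph V) (e : Sym2 V) (he : e ∈ K.edgeSet)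
    (hbr : ∀ a b : V, e = s(a,b) → ¬ (K.deleteEdges {e}).Reachable a b) :
    Nat.card K.ConnectedComponent + 1 ≤ Nat.card (K.deleteEdges {e}).ConnectedComponent := by
  induction e using Sym2.ind with
  | _ a b =>
  set K' := K.deleteEdges {s(a,b)} with hK'
  have hle : K' ≤ K := deleteEdges_le _
  let φ : K'.ConnectedComponent → K.ConnectedComponent :=
    ConnectedComponent.map (Hom.ofLE hle)
  have hsurj : Function.Surjective φ := by
    intro c
    induction c using ConnectedComponent.ind with
    | _ v => exact ⟨K'.connectedComponentMk v, ConnectedComponent.map_mk _ _⟩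
  have h1 : Nat.card K.ConnectedComponent ≤ Nat.card K'.ConnectedComponent :=
    Nat.card_le_card_of_surjective φ hsurj
  rcases eq_or_lt_of_le h1 with heq | hlt
  · exfalso
    -- equal cards + surjective ⇒ bijective ⇒ injective, contradiction
    have : Fintype K'.ConnectedComponent := Fintype.ofFinite _
    have : Fintype K.ConnectedComponent := Fintype.ofFinite _
    have hcards : Fintype.card K'.ConnectedComponent = Fintype.card K.ConnectedComponent := by
      rw [← Nat.card_eq_fintype_card, ← Nat.card_eq_fintype_card, heq]
    have hbij : Function.Bijective φ :=
      (Fintype.bijective_iff_surjective_and_card φ).mpr ⟨hsurj, hcards⟩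
    have hne : K'.connectedComponentMk a ≠ K'.connectedComponentMk b := by
      intro hc
      exact hbr a b rfl (ConnectedComponent.eq.mp hc)
    apply hne
    apply hbij.injective
    show ConnectedComponent.map _ _ = ConnectedComponent.map _ _
    rw [ConnectedComponent.map_mk, ConnectedComponent.map_mk]
    exact ConnectedComponent.eq.mpr (Adj.reachable (K.mem_edgeSet.mp he))
  · omega

lemma comp_many [Finite V] (K : SimpleGraph V) (D : Finset (Sym2 V))
    (hD : ∀ e ∈ D, e ∈ K.edgeSet ∧ ∀ a b : V, e = s(a,b) → ¬ (K.deleteEdges {e}).Reachable a b) :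
    Nat.card K.ConnectedComponent + D.card ≤ Nat.card (K.deleteEdges ↑D).ConnectedComponent := by
  classical
  induction D using Finset.induction with
  | empty => simp [deleteEdges_empty]
  | @insert e D henD ih =>
    have hins := hD e (mem_insert_self _ _)
    have hrest : ∀ e' ∈ D, e' ∈ K.edgeSet ∧
        ∀ a b : V, e' = s(a,b) → ¬ (K.deleteEdges {e'}).Reachable a b :=
      fun e' he' => hD e' (mem_insert_of_mem he')
    have step : Nat.card (K.deleteEdges ↑D).ConnectedComponent + 1 ≤
        Nat.card ((K.deleteEdges ↑D).deleteEdges {e}).ConnectedComponent := by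
      apply comp_succ
      · rw [edgeSet_deleteEdges]
        exact ⟨hins.1, by simpa using henD⟩
      · intro a b hab h
        apply hins.2 a b hab
        have hle2 : (K.deleteEdges ↑D).deleteEdges {e} ≤ K.deleteEdges {e} := by
          rw [deleteEdges_deleteEdges]
          exact deleteEdges_anti Set.subset_union_right
        exact h.mono hle2
    have ihD := ih hrest
    have : (K.deleteEdges ↑(insert e D)) = (K.deleteEdges ↑D).deleteEdges {e} := by
      rw [deleteEdges_deleteEdges, Finset.coe_insert, Set.insert_eq, Set.union_comm]
    rw [this, Finset.card_insert_of_notMem henD]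
    omega


lemma sum_pow_powerset [DecidableEq 𝒞] (M : Finset 𝒞) (x : ℕ) :
    ∑ T ∈ M.powerset, x ^ T.card = (x+1) ^ M.card := by
  have h := Finset.prod_add (fun _ : 𝒞 => x) (fun _ : 𝒞 => 1) M
  simp only [Finset.prod_const, Finset.prod_const_one, one_pow, mul_one] at h
  exact h.symm

lemma sum_pow_subsets [DecidableEq 𝒞] (R A B : Finset 𝒞) (hA : A ⊆ R) (hAB : Disjoint A B)
    (x : ℕ) :
    ∑ T ∈ R.powerset.filter (fun T => A ⊆ T ∧ Disjoint B T), x ^ T.card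
      = x ^ A.card * (x+1) ^ ((R \ (A ∪ B)).card) := by
  rw [← sum_pow_powerset (R \ (A ∪ B)) x, Finset.mul_sum]
  apply Finset.sum_bij' (fun T _ => T \ A) (fun T' _ => A ∪ T')
  · -- hi : maps into powerset (R \ (A∪B))
    intro T hT
    simp only [Finset.mem_filter, Finset.mem_powerset] at hT
    rw [Finset.mem_powerset]
    intro c hc
    simp only [Finset.mem_sdiff] at hc ⊢
    refine ⟨hT.1 hc.1, ?_⟩
    simp only [Finset.mem_union]
    push_neg
    refine ⟨hc.2, fun hcB => (Finset.disjoint_left.mp hT.2.2 hcB) hc.1⟩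
  · -- hj : maps back into the filtered powerset
    intro T' hT'
    rw [Finset.mem_powerset] at hT'
    simp only [Finset.mem_filter, Finset.mem_powerset]
    refine ⟨Finset.union_subset hA (hT'.trans Finset.sdiff_subset), Finset.subset_union_left, ?_⟩
    rw [Finset.disjoint_right]
    intro c hc hcB
    rw [Finset.mem_union] at hc
    rcases hc with hcA | hcT'
    · exact (Finset.disjoint_left.mp hAB hcA) hcB
    · have hmem := hT' hcT'
      rw [Finset.mem_sdiff, Finset.mem_union] at hmem
      exact hmem.2 (Or.inr hcB)
  · -- left inverse
    intro T hT
    simp only [Finset.mem_filter, Finset.mem_powerset] at hT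
    exact Finset.union_sdiff_of_subset hT.2.1
  · -- right inverse
    intro T' hT'
    rw [Finset.mem_powerset] at hT'
    apply Finset.union_sdiff_cancel_left
    rw [Finset.disjoint_right]
    intro c hc
    have := hT' hc
    simp only [Finset.mem_sdiff, Finset.mem_union] at this
    exact fun hcA => this.2 (Or.inl hcA)
  · -- values
    intro T hT
    simp only [Finset.mem_filter, Finset.mem_powerset] at hT
    rw [← pow_add]
    congr 1
    have := Finset.card_sdiff_add_card_eq_card hT.2.1
    omega

lemma final_arith (lam n m : ℕ) (h1 : 1 ≤ lam)
    (h : m * lam ^ lam ≤ (lam+1) ^ (lam+2) * n) :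
    (m : ℝ) ≤ 12 * (lam:ℝ) ^ 2 * n := by
  rw [Nat.add_comm lam 1] at h
  have hx : (1:ℝ) ≤ (lam:ℝ) := by exact_mod_cast h1
  have hx0 : (0:ℝ) < (lam:ℝ) := by linarith
  have hcast : (m:ℝ) * (lam:ℝ) ^ lam ≤ (1+(lam:ℝ)) ^ (lam+2) * n := by exact_mod_cast h
  have hkey : (1+(lam:ℝ)) ^ lam ≤ 3 * (lam:ℝ) ^ lam := by
    have h2 : (1+(lam:ℝ)) = (lam:ℝ) * (1 + 1/(lam:ℝ)) := by
      field_simp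
      ring
    rw [h2, mul_pow]
    have h3 : (1 + 1/(lam:ℝ)) ^ lam ≤ Real.exp (1/(lam:ℝ)) ^ lam := by
      apply pow_le_pow_left₀ (by positivity)
      have := Real.add_one_le_exp (1/(lam:ℝ))
      linarith
    have h4 : Real.exp (1/(lam:ℝ)) ^ lam = Real.exp ((lam:ℝ) * (1/(lam:ℝ))) :=
      (Real.exp_nat_mul _ _).symm
    have h5 : (lam:ℝ) * (1/(lam:ℝ)) = 1 := by field_simp
    have h6 : Real.exp 1 ≤ 3 := by
      have := Real.exp_one_lt_d9
      norm_num at this ⊢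
      linarith
    calc (lam:ℝ)^lam * (1 + 1/(lam:ℝ))^lam ≤ (lam:ℝ)^lam * Real.exp (1/(lam:ℝ)) ^ lam := by
          apply mul_le_mul_of_nonneg_left h3 (by positivity)
      _ = (lam:ℝ)^lam * Real.exp 1 := by rw [h4, h5]
      _ ≤ (lam:ℝ)^lam * 3 := by apply mul_le_mul_of_nonneg_left h6 (by positivity)
      _ = 3 * (lam:ℝ)^lam := by ring
  have hsq : (1+(lam:ℝ)) ^ 2 ≤ 4 * (lam:ℝ)^2 := by nlinarith
  have hchain : (m:ℝ) * (lam:ℝ) ^ lam ≤ (12 * (lam:ℝ)^2 * n) * (lam:ℝ)^lam := by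
    have e1 : (1+(lam:ℝ)) ^ (lam+2) = (1+(lam:ℝ))^2 * (1+(lam:ℝ))^lam := by
      rw [← pow_add]; ring_nf
    have hn0 : (0:ℝ) ≤ (n:ℝ) := Nat.cast_nonneg _
    calc (m:ℝ) * (lam:ℝ) ^ lam ≤ (1+(lam:ℝ)) ^ (lam+2) * n := hcast
      _ = ((1+(lam:ℝ))^2 * (1+(lam:ℝ))^lam) * n := by rw [e1]
      _ ≤ ((4*(lam:ℝ)^2) * (3 * (lam:ℝ)^lam)) * n := by
          apply mul_le_mul_of_nonneg_right _ hn0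
          apply mul_le_mul hsq hkey (by positivity) (by positivity)
      _ = (12 * (lam:ℝ)^2 * n) * (lam:ℝ)^lam := by ring
  exact le_of_mul_le_mul_right hchain (by positivity)


lemma term_bound (x lam f s r Rc : ℕ) (hf : f ≤ lam) (hs : s ≤ 3) (hR : Rc ≤ r + f + s) :
    x^lam * (x+1)^Rc ≤ (x+1)^(lam+3) * (x^f * (x+1)^r) := by
  calc x^lam * (x+1)^Rc ≤ x^lam * (x+1)^(r+f+s) :=
        Nat.mul_le_mul_left _ (Nat.pow_le_pow_right (Nat.le_add_left 1 x) hR)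
    _ = (x^f * x^(lam-f)) * ((x+1)^r * (x+1)^(f+s)) := by
        rw [← pow_add, ← pow_add, Nat.add_sub_cancel' hf]
        ring
    _ ≤ (x^f * (x+1)^(lam-f)) * ((x+1)^r * (x+1)^(f+s)) := by
        have h1 : x^(lam-f) ≤ (x+1)^(lam-f) := Nat.pow_le_pow_left (Nat.le_succ x) _
        exact Nat.mul_le_mul_right _ (Nat.mul_le_mul_left _ h1)
    _ = (x+1)^((lam-f)+(f+s)) * (x^f * (x+1)^r) := by
        rw [pow_add]
        ring
    _ ≤ (x+1)^(lam+3) * (x^f * (x+1)^r) := by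
        apply Nat.mul_le_mul_right
        apply Nat.pow_le_pow_right (Nat.le_add_left 1 x)
        omega

lemma crit_bound {V 𝒞 : Type} [Fintype V] (lam : ℕ) (cE : Sym2 V → 𝒞) (cV : V → 𝒞)
    (H : SimpleGraph V)
    (hcrit : ∀ e ∈ H.edgeSet, ∃ F : Finset 𝒞, F.card ≤ lam ∧ e ∉ kif cE cV F ∧
      ∀ a b : V, e = s(a,b) → ¬ ((H.deleteEdges ({e} ∪ kif cE cV F)).Reachable a b)) :
    H.edgeSet.ncard * lam ^ lam ≤ (lam+1) ^ (lam+2) * Fintype.card V := by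
  classical
  letI : Fintype ↑H.edgeSet := Fintype.ofFinite _
  set E := H.edgeFinset.attach with hE
  have hm : H.edgeSet.ncard = E.card := by
    rw [Finset.card_attach, Set.ncard_eq_toFinset_card']
    congr 1
  -- witnesses
  have hmemS : ∀ ε : {e // e ∈ H.edgeFinset}, (ε : Sym2 V) ∈ H.edgeSet :=
    fun ε => mem_edgeFinset.mp ε.2
  let wit : {e // e ∈ H.edgeFinset} → Finset 𝒞 := fun ε => (hcrit ε (hmemS ε)).choose
  have hwit : ∀ ε : {e // e ∈ H.edgeFinset}, (wit ε).card ≤ lam ∧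
      (ε : Sym2 V) ∉ kif cE cV (wit ε) ∧
      ∀ a b : V, (ε : Sym2 V) = s(a,b) →
        ¬ ((H.deleteEdges ({(ε : Sym2 V)} ∪ kif cE cV (wit ε))).Reachable a b) :=
    fun ε => (hcrit ε (hmemS ε)).choose_spec
  -- canonical representatives of edges
  have hex : ∀ e : Sym2 V, ∃ p : V × V, e = s(p.1, p.2) := fun e =>
    Sym2.ind (fun a b => ⟨(a,b), rfl⟩) e
  let rp : Sym2 V → V × V := fun e => (hex e).choose
  have hrp : ∀ e : Sym2 V, e = s((rp e).1, (rp e).2) := fun e => (hex e).choose_spec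
  let Se : Sym2 V → Finset 𝒞 := fun e => {cE e, cV (rp e).1, cV (rp e).2}
  have hSecard : ∀ e, (Se e).card ≤ 3 := by
    intro e
    refine (Finset.card_insert_le _ _).trans ?_
    have h2 : ({cV (rp e).1, cV (rp e).2} : Finset 𝒞).card ≤ 2 := by
      refine (Finset.card_insert_le _ _).trans ?_
      simp
    omega
  have hkifSe : ∀ (e : Sym2 V) (T : Finset 𝒞), e ∉ kif cE cV T ↔ Disjoint (Se e) T := by
    intro e T
    have hmk : e ∈ kif cE cV T ↔ (cE e ∈ T ∨ cV (rp e).1 ∈ T ∨ cV (rp e).2 ∈ T) := by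
      conv_lhs => rw [hrp e]
      rw [mem_kif, ← hrp e]
    rw [hmk, Finset.disjoint_left]
    constructor
    · intro h c hc hcT
      simp only [Se, Finset.mem_insert, Finset.mem_singleton] at hc
      rcases hc with rfl | rfl | rfl
      · exact h (Or.inl hcT)
      · exact h (Or.inr (Or.inl hcT))
      · exact h (Or.inr (Or.inr hcT))
    · intro h hc
      rcases hc with h1 | h1 | h1
      · exact h (by simp [Se]) h1
      · exact h (by simp [Se]) h1
      · exact h (by simp [Se]) h1
  -- the relevant color universe
  set R : Finset 𝒞 := (Finset.univ.image cV) ∪ E.biUnion (fun ε => wit ε ∪ Se ε.1) with hR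
  have hcVR : ∀ v : V, cV v ∈ R :=
    fun v => Finset.mem_union_left _ (Finset.mem_image_of_mem cV (Finset.mem_univ v))
  have hwitR : ∀ ε : {e // e ∈ H.edgeFinset}, wit ε ⊆ R := by
    intro ε c hc
    exact Finset.mem_union_right _
      (Finset.mem_biUnion.mpr ⟨ε, Finset.mem_attach _ _, Finset.mem_union_left _ hc⟩)
  have hSeR : ∀ ε : {e // e ∈ H.edgeFinset}, Se ε.1 ⊆ R := by
    intro ε c hc
    exact Finset.mem_union_right _
      (Finset.mem_biUnion.mpr ⟨ε, Finset.mem_attach _ _, Finset.mem_union_right _ hc⟩)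
  have hdisjWS : ∀ ε : {e // e ∈ H.edgeFinset}, Disjoint (wit ε) (Se ε.1) :=
    fun ε => ((hkifSe ε.1 (wit ε)).mp (hwit ε).2.1).symm
  -- separated edges are few, for every fault set T
  set SepA : Finset 𝒞 → Finset {e // e ∈ H.edgeFinset} := fun T =>
    E.filter (fun ε => wit ε ⊆ T ∧ Disjoint (Se ε.1) T) with hSepA
  have perT : ∀ T : Finset 𝒞,
      (SepA T).card ≤ (Finset.univ.filter (fun v => cV v ∉ T)).card := by
    intro T
    set K := H.deleteEdges (kif cE cV T) with hK
    set D : Finset (Sym2 V) := (SepA T).image Subtype.val with hD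
    have hDcard : D.card = (SepA T).card :=
      Finset.card_image_of_injective _ Subtype.val_injective
    have hDprop : ∀ e ∈ D, e ∈ K.edgeSet ∧
        ∀ a b : V, e = s(a,b) → ¬ (K.deleteEdges {e}).Reachable a b := by
      intro e he
      rw [hD, Finset.mem_image] at he
      obtain ⟨ε, hεmem, rfl⟩ := he
      rw [hSepA, Finset.mem_filter] at hεmem
      obtain ⟨-, hsub, hdisj⟩ := hεmem
      have halive : (ε : Sym2 V) ∉ kif cE cV T := (hkifSe _ T).mpr hdisj
      constructor
      · rw [hK, edgeSet_deleteEdges]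
        exact ⟨hmemS ε, halive⟩
      · intro a b hab hreach
        apply (hwit ε).2.2 a b hab
        refine hreach.mono ?_
        rw [hK, deleteEdges_deleteEdges]
        apply SimpleGraph.deleteEdges_anti
        intro f hf
        rcases hf with hf | hf
        · exact Or.inr hf
        · exact Or.inl (kif_mono cE cV hsub hf)
    have hcm := comp_many K D hDprop
    have hcle : Nat.card (K.deleteEdges ↑D).ConnectedComponent ≤ Fintype.card V := by
      rw [← Nat.card_eq_fintype_card]
      exact comp_le_card _
    have hiso : ∀ a : V, cV a ∈ T → ∀ z : V, ¬ K.Adj a z := by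
      intro a ha z hz
      rw [hK, deleteEdges_adj] at hz
      exact hz.2 (Or.inr ⟨a, Sym2.mem_iff.mpr (Or.inl rfl), ha⟩)
    have hreq : ∀ a z : V, cV a ∈ T → K.Reachable a z → a = z := by
      intro a z ha h
      obtain ⟨w⟩ := h
      cases w with
      | nil => rfl
      | cons h _ => exact absurd h (hiso a ha _)
    have hdead : (Finset.univ.filter (fun v => cV v ∈ T)).card ≤
        Nat.card K.ConnectedComponent := by
      have hinj : Function.Injective
          (fun y : {v : V // cV v ∈ T} => K.connectedComponentMk y.1) := by
        intro y z hyz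
        rw [ConnectedComponent.eq] at hyz
        exact Subtype.ext (hreq _ _ y.2 hyz)
      calc (Finset.univ.filter (fun v => cV v ∈ T)).card
          = Nat.card {v : V // cV v ∈ T} := by
            rw [Nat.card_eq_fintype_card, Fintype.card_subtype]
        _ ≤ Nat.card K.ConnectedComponent := Nat.card_le_card_of_injective _ hinj
    have hsplit := Finset.card_filter_add_card_filter_not
      (s := (Finset.univ : Finset V)) (fun v => cV v ∈ T)
    rw [Finset.card_univ] at hsplit
    omega
  -- weighted double counting
  set x := lam with hxdef
  set L := ∑ T ∈ R.powerset, x ^ T.card * (SepA T).card with hL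
  have hswap : L = ∑ ε ∈ E,
      ∑ T ∈ R.powerset.filter (fun T => wit ε ⊆ T ∧ Disjoint (Se ε.1) T), x ^ T.card := by
    rw [hL]
    have hstep : ∀ T : Finset 𝒞, x ^ T.card * (SepA T).card
        = ∑ ε ∈ E, (if wit ε ⊆ T ∧ Disjoint (Se ε.1) T then x ^ T.card else 0) := by
      intro T
      rw [hSepA, Finset.card_filter, Finset.mul_sum]
      refine Finset.sum_congr rfl (fun ε _ => ?_)
      split <;> simp
    rw [Finset.sum_congr rfl (fun T _ => hstep T), Finset.sum_comm]
    refine Finset.sum_congr rfl (fun ε _ => ?_)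
    rw [Finset.sum_filter]
  have hLform : L = ∑ ε ∈ E, x ^ (wit ε).card * (x+1) ^ ((R \ (wit ε ∪ Se ε.1)).card) := by
    rw [hswap]
    exact Finset.sum_congr rfl (fun ε _ =>
      sum_pow_subsets R (wit ε) (Se ε.1) (hwitR ε) (hdisjWS ε) x)
  have hmain : E.card * (x^lam * (x+1)^R.card) ≤ (x+1)^(lam+3) * L := by
    calc E.card * (x^lam * (x+1)^R.card)
        = ∑ _ε ∈ E, x^lam * (x+1)^R.card := by rw [Finset.sum_const, smul_eq_mul]
      _ ≤ ∑ ε ∈ E, (x+1)^(lam+3) * (x ^ (wit ε).card * (x+1) ^ ((R \ (wit ε ∪ Se ε.1)).card)) := by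
          refine Finset.sum_le_sum (fun ε _ => ?_)
          have h1 : (R \ (wit ε ∪ Se ε.1)).card + (wit ε ∪ Se ε.1).card = R.card :=
            Finset.card_sdiff_add_card_eq_card (Finset.union_subset (hwitR ε) (hSeR ε))
          have h2 : (wit ε ∪ Se ε.1).card ≤ (wit ε).card + (Se ε.1).card :=
            Finset.card_union_le _ _
          exact term_bound x lam (wit ε).card (Se ε.1).card _ _ (hwit ε).1 (hSecard ε.1)
            (by omega)
      _ = (x+1)^(lam+3) * L := by rw [hLform, Finset.mul_sum]
  have hAlive : ∑ T ∈ R.powerset, x ^ T.card * (Finset.univ.filter (fun v => cV v ∉ T)).card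
      = ∑ v : V, (x+1) ^ ((R \ {cV v}).card) := by
    have hstep : ∀ T : Finset 𝒞,
        x ^ T.card * (Finset.univ.filter (fun v => cV v ∉ T)).card
        = ∑ v : V, (if cV v ∉ T then x ^ T.card else 0) := by
      intro T
      rw [Finset.card_filter, Finset.mul_sum]
      refine Finset.sum_congr rfl (fun v _ => ?_)
      split <;> simp
    rw [Finset.sum_congr rfl (fun T _ => hstep T), Finset.sum_comm]
    refine Finset.sum_congr rfl (fun v _ => ?_)
    rw [← Finset.sum_filter]
    have hvema := sum_pow_subsets R ∅ {cV v} (Finset.empty_subset R)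
      (Finset.disjoint_empty_left _) x
    simp only [Finset.card_empty, pow_zero, one_mul, Finset.empty_union] at hvema
    rw [← hvema]
    refine Finset.sum_congr ?_ (fun _ _ => rfl)
    refine Finset.filter_congr (fun T _ => ?_)
    simp [Finset.disjoint_singleton_left]
  have hLup : L ≤ ∑ v : V, (x+1) ^ ((R \ {cV v}).card) := by
    rw [← hAlive, hL]
    exact Finset.sum_le_sum (fun T _ => Nat.mul_le_mul_left _ (perT T))
  have hcancel : ∀ v : V, (x+1) ^ ((R \ {cV v}).card) * (x+1) = (x+1) ^ R.card := by
    intro v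
    rw [← pow_succ]
    congr 1
    have hsub : ({cV v} : Finset 𝒞) ⊆ R := Finset.singleton_subset_iff.mpr (hcVR v)
    have := Finset.card_sdiff_add_card_eq_card hsub
    simp only [Finset.card_singleton] at this
    omega
  -- put everything together and cancel
  have htot : (E.card * x^lam) * ((x+1)^R.card * (x+1))
      ≤ ((x+1)^(lam+2) * Fintype.card V) * ((x+1)^R.card * (x+1)) := by
    calc (E.card * x^lam) * ((x+1)^R.card * (x+1))
        = (E.card * (x^lam * (x+1)^R.card)) * (x+1) := by ring
      _ ≤ ((x+1)^(lam+3) * L) * (x+1) := Nat.mul_le_mul_right _ hmain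
      _ = (x+1)^(lam+3) * (L * (x+1)) := by ring
      _ ≤ (x+1)^(lam+3) * ((∑ v : V, (x+1) ^ ((R \ {cV v}).card)) * (x+1)) := by
          exact Nat.mul_le_mul_left _ (Nat.mul_le_mul_right _ hLup)
      _ = (x+1)^(lam+3) * (∑ v : V, (x+1) ^ ((R \ {cV v}).card) * (x+1)) := by
          rw [Finset.sum_mul]
      _ = (x+1)^(lam+3) * (∑ _v : V, (x+1) ^ R.card) := by
          rw [Finset.sum_congr rfl (fun v _ => hcancel v)]
      _ = (x+1)^(lam+3) * (Fintype.card V * (x+1)^R.card) := by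
          rw [Finset.sum_const, smul_eq_mul, Finset.card_univ]
      _ = ((x+1)^(lam+2) * Fintype.card V) * ((x+1)^R.card * (x+1)) := by
          rw [pow_succ]
          ring
  have hfin : E.card * x^lam ≤ (x+1)^(lam+2) * Fintype.card V := by
    have hpos : 0 < (x+1)^R.card * (x+1) := by positivity
    exact Nat.le_of_mul_le_mul_right htot hpos
  rw [hm]
  exact hfin

def Good (lam : ℕ) (G : SimpleGraph V) (cE : Sym2 V → 𝒞) (cV : V → 𝒞)
    (H : SimpleGraph V) : Prop :=
  H ≤ G ∧ ∀ F : Finset 𝒞, F.card ≤ lam → ∀ u v : V,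
    (H.deleteEdges (kif cE cV F)).Reachable u v ↔
      (G.deleteEdges (kif cE cV F)).Reachable u v

lemma good_del (lam : ℕ) (G : SimpleGraph V) (cE : Sym2 V → 𝒞) (cV : V → 𝒞)
    (H : SimpleGraph V) (hG : Good lam G cE cV H) (a b : V) (hab : s(a,b) ∈ H.edgeSet)
    (hrm : ∀ F : Finset 𝒞, F.card ≤ lam → s(a,b) ∉ kif cE cV F →
      (H.deleteEdges ({s(a,b)} ∪ kif cE cV F)).Reachable a b) :
    Good lam G cE cV (H.deleteEdges {s(a,b)}) := by
  refine ⟨(deleteEdges_le _).trans hG.1, ?_⟩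
  intro F hF u v
  rw [deleteEdges_deleteEdges]
  by_cases hk : s(a,b) ∈ kif cE cV F
  · have hunion : ({s(a,b)} : Set (Sym2 V)) ∪ kif cE cV F = kif cE cV F :=
      Set.union_eq_self_of_subset_left (Set.singleton_subset_iff.mpr hk)
    rw [hunion]
    exact hG.2 F hF u v
  · constructor
    · intro h
      exact (hG.2 F hF u v).mp
        (h.mono (SimpleGraph.deleteEdges_anti Set.subset_union_right))
    · intro h
      have h2 : (H.deleteEdges (kif cE cV F)).Reachable u v := (hG.2 F hF u v).mpr h
      have hr : ((H.deleteEdges (kif cE cV F)).deleteEdges {s(a,b)}).Reachable a b := by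
        rw [deleteEdges_deleteEdges, Set.union_comm]
        exact hrm F hF hk
      have h3 := reach_del (H.deleteEdges (kif cE cV F)) a b hr h2
      rw [deleteEdges_deleteEdges, Set.union_comm] at h3
      exact h3

end Stmt6
end

open Stmt6

/-- `λ`-CFT connectivity certificates of size `O(λ²n)` for graphs with
both vertices and edges colored. -/
theorem stmt_6 :
    ∃ C : ℝ, 0 < C ∧
      ∀ (lam : ℕ), 1 ≤ lam →
        ∀ (V : Type) [Fintype V] (𝒞 : Type) (G : SimpleGraph V)
          (cE : Sym2 V → 𝒞) (cV : V → 𝒞),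
          ∃ H : SimpleGraph V, H ≤ G ∧
            (H.edgeSet.ncard : ℝ) ≤ C * (lam : ℝ) ^ 2 * (Fintype.card V : ℝ) ∧
            ∀ F : Finset 𝒞, F.card ≤ lam → ∀ u v : V,
              (H.deleteEdges {e | cE e ∈ F ∨ ∃ x ∈ e, cV x ∈ F}).Reachable u v ↔
                (G.deleteEdges {e | cE e ∈ F ∨ ∃ x ∈ e, cV x ∈ F}).Reachable u v := by
  refine ⟨12, by norm_num, ?_⟩
  intro lam hlam V _ 𝒞 G cE cV
  classical
  have hexists : ∃ k : ℕ, ∃ H : SimpleGraph V, Good lam G cE cV H ∧ H.edgeSet.ncard = k :=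
    ⟨G.edgeSet.ncard, G, ⟨le_refl G, fun F _ u v => Iff.rfl⟩, rfl⟩
  obtain ⟨H, hHGood, hHcard⟩ := Nat.find_spec hexists
  have hmin : ∀ H' : SimpleGraph V, Good lam G cE cV H' →
      Nat.find hexists ≤ H'.edgeSet.ncard :=
    fun H' h => Nat.find_min' hexists ⟨H', h, rfl⟩
  have hcrit : ∀ e ∈ H.edgeSet, ∃ F : Finset 𝒞, F.card ≤ lam ∧ e ∉ kif cE cV F ∧
      ∀ a b : V, e = s(a,b) →
        ¬ ((H.deleteEdges ({e} ∪ kif cE cV F)).Reachable a b) := by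
    intro e he
    induction e using Sym2.ind with
    | _ a b =>
    by_contra hcon
    push_neg at hcon
    have hrm : ∀ F : Finset 𝒞, F.card ≤ lam → s(a,b) ∉ kif cE cV F →
        ((H.deleteEdges ({s(a,b)} ∪ kif cE cV F)).Reachable a b) := by
      intro F hF halive
      obtain ⟨a', b', hab, hr⟩ := hcon F hF halive
      rw [Sym2.eq_iff] at hab
      rcases hab with ⟨rfl, rfl⟩ | ⟨rfl, rfl⟩
      · exact hr
      · exact hr.symm
    have hGood' := good_del lam G cE cV H hHGood a b he hrm
    have hlt : (H.deleteEdges {s(a,b)}).edgeSet.ncard < H.edgeSet.ncard := by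
      rw [edgeSet_deleteEdges]
      exact Set.ncard_diff_singleton_lt_of_mem he (Set.toFinite _)
    have hge := hmin _ hGood'
    omega
  refine ⟨H, hHGood.1, ?_, fun F hF u v => hHGood.2 F hF u v⟩
  exact final_arith lam (Fintype.card V) (H.edgeSet.ncard) hlam
    (crit_bound lam cE cV H hcrit)
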